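/- The dimension of the matroid base polytope of a matroid M on n elements equals n - κ(M), where κ(M) is the number of connected components of M. -/

import Mathlib

open Matroid

/-- The matroid base polytope: the convex hull in `ℝ^ℕ` (only the first `n` coordinates are
ever used) of the indicator vectors of the bases of `M`. -/
def basePolytope (M : Matroid ℕ) : Set (ℕ → ℝ) :=
  convexHull ℝ {x | ∃ B : Set ℕ, M.IsBase B ∧ x = B.indicator 1}

/-- A circuit of `M`: a minimal dependent set. -/
def IsCircuitE (M : Matroid ℕ) (C : Set ℕ) : Prop := Minimal M.Dep C

/-- The number of connected components of `M`: the number of equivalence classes of the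
ground set under the equivalence relation generated by "lying in a common circuit"
(loops and coloops give singleton classes). -/
noncomputable def numComponents (M : Matroid ℕ) : ℕ :=
  Set.ncard {S : Set ℕ | ∃ a ∈ M.E,
    S = {b ∈ M.E |
      Relation.EqvGen (fun x y => ∃ C, IsCircuitE M C ∧ x ∈ C ∧ y ∈ C) a b}}

namespace MBP

/-- The set of vertices of the base polytope. -/
def vertexSet (M : Matroid ℕ) : Set (ℕ → ℝ) := {x | ∃ B : Set ℕ, M.IsBase B ∧ x = B.indicator 1}

/-- The relation "lie in a common circuit". -/
def relC (M : Matroid ℕ) (x y : ℕ) : Prop := ∃ C, IsCircuitE M C ∧ x ∈ C ∧ y ∈ C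

/-- The connected component of `a`. -/
def cls (M : Matroid ℕ) (a : ℕ) : Set ℕ := {b ∈ M.E | Relation.EqvGen (relC M) a b}

variable {M : Matroid ℕ} {B C D : Set ℕ} {a b e f x y : ℕ}

lemma cls_subset_ground (M : Matroid ℕ) (a : ℕ) : cls M a ⊆ M.E := fun _ h => h.1

lemma mem_cls_self (ha : a ∈ M.E) : a ∈ cls M a := ⟨ha, Relation.EqvGen.refl a⟩

lemma cls_eq_of_eqvGen (h : Relation.EqvGen (relC M) a b) : cls M a = cls M b := by
  ext x
  exact ⟨fun hx => ⟨hx.1, (Relation.EqvGen.symm _ _ h).trans _ _ _ hx.2⟩,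
    fun hx => ⟨hx.1, h.trans _ _ _ hx.2⟩⟩

lemma cls_eq_of_mem (h : b ∈ cls M a) : cls M a = cls M b := cls_eq_of_eqvGen h.2

open Classical in
/-- A representative of each component. -/
noncomputable def rep (M : Matroid ℕ) (a : ℕ) : ℕ :=
  if h : (cls M a).Nonempty then h.some else 0

lemma rep_mem (ha : a ∈ M.E) : rep M a ∈ cls M a := by
  have h : (cls M a).Nonempty := ⟨a, mem_cls_self ha⟩
  rw [rep, dif_pos h]
  exact h.some_mem

open Classical in
lemma rep_eq_of_cls_eq (h : cls M a = cls M b) : rep M a = rep M b := by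
  unfold rep
  exact congrArg (fun S : Set ℕ => if h : S.Nonempty then h.some else 0) h

lemma rep_idem (ha : a ∈ M.E) : rep M (rep M a) = rep M a :=
  rep_eq_of_cls_eq (cls_eq_of_mem (rep_mem ha)).symm

/-- The set of representatives. -/
def Rset (M : Matroid ℕ) : Set ℕ := {k ∈ M.E | rep M k = k}

lemma Rset_subset_ground : Rset M ⊆ M.E := fun _ h => h.1

lemma rep_mem_Rset (ha : a ∈ M.E) : rep M a ∈ Rset M :=
  ⟨cls_subset_ground M a (rep_mem ha), rep_idem ha⟩

lemma eq_rep_of_mem_Rset_cls (hk : b ∈ Rset M) (hb : b ∈ cls M a) : b = rep M a := by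
  rw [← hk.2]
  exact (rep_eq_of_cls_eq (cls_eq_of_mem hb)).symm

/-- Every dependent set contains a circuit (in the finite setting). -/
lemma exists_circuitE_subset (hfin : M.E.Finite) (hD : M.Dep D) :
    ∃ C, IsCircuitE M C ∧ C ⊆ D := by
  have hset : {D' : Set ℕ | D' ⊆ D ∧ M.Dep D'}.Finite :=
    (hfin.subset hD.subset_ground).finite_subsets.subset (fun D' hD' => hD'.1)
  obtain ⟨C, hC, hCmin⟩ := Set.Finite.exists_minimalFor id _ hset ⟨D, subset_rfl, hD⟩
  refine ⟨C, ⟨hC.2, fun y hy hyC => ?_⟩, hC.1⟩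
  have := hCmin ⟨hyC.trans hC.1, hy⟩ hyC
  simp only [id] at this
  exact this

lemma circuitE_subset_ground (hC : IsCircuitE M C) : C ⊆ M.E := hC.1.subset_ground

lemma circuitE_diff_singleton_indep (hC : IsCircuitE M C) (hf : f ∈ C) :
    M.Indep (C \ {f}) := by
  rw [← M.not_dep_iff (Set.diff_subset.trans (circuitE_subset_ground hC))]
  intro hdep
  exact (hC.2 hdep Set.diff_subset hf).2 rfl

lemma circuitE_mem_closure_diff (hC : IsCircuitE M C) (hf : f ∈ C) :
    f ∈ M.closure (C \ {f}) := by
  have h := (circuitE_diff_singleton_indep hC hf).insert_dep_iff (e := f)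
  rw [Set.insert_diff_singleton, Set.insert_eq_of_mem hf] at h
  exact (h.mp hC.1).1

/-- Basis exchange along a circuit. -/
lemma circuit_exchange (hfin : M.E.Finite) (hB : M.IsBase B) (hC : IsCircuitE M C)
    (hCB : C ⊆ insert e B) (heC : e ∈ C) (heB : e ∉ B) (hfC : f ∈ C) (hfe : f ≠ e) :
    M.IsBase (insert e (B \ {f})) := by
  have hfB : f ∈ B := (hCB hfC).resolve_left hfe
  have hfcl : f ∈ M.closure (C \ {f}) := circuitE_mem_closure_diff hC hfC
  set B' := insert e (B \ {f}) with hB'def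
  have hB'E : B' ⊆ M.E :=
    Set.insert_subset ((circuitE_subset_ground hC) heC) (Set.diff_subset.trans hB.subset_ground)
  have hCf_sub : C \ {f} ⊆ B' := by
    rintro c ⟨hcC, hcf⟩
    rcases hCB hcC with rfl | hcB
    · exact Set.mem_insert _ _
    · exact Set.mem_insert_of_mem _ ⟨hcB, hcf⟩
  have hBcl : B ⊆ M.closure B' := by
    intro z hz
    rcases eq_or_ne z f with rfl | hzf
    · exact M.closure_subset_closure hCf_sub hfcl
    · exact M.subset_closure B' hB'E (Set.mem_insert_of_mem _ ⟨hz, hzf⟩)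
  have hsp : M.Spanning B' := by
    rw [Matroid.spanning_iff_closure_eq hB'E]
    refine subset_antisymm (M.closure_subset_ground B') ?_
    rw [← hB.closure_eq]
    exact Matroid.closure_subset_closure_of_subset_closure hBcl
  obtain ⟨B'', hB'', hB''sub⟩ := hsp.exists_isBase_subset
  have hcard : B'.encard = B''.encard := by
    rw [hB''.encard_eq_encard_of_isBase hB, hB'def,
      Set.encard_insert_of_notMem (fun h => heB h.1), Set.encard_diff_singleton_add_one hfB]
  have : B'' = B' :=
    (hfin.subset hB'E).eq_of_subset_of_encard_le' hB''sub hcard.le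
  rwa [← this]

lemma indicator_sub_eq (hxB : x ∈ B) (hyB : y ∉ B) :
    Set.indicator B (1 : ℕ → ℝ) - Set.indicator (insert y (B \ {x})) 1 =
      Pi.single x 1 - Pi.single y 1 := by
  have hxy : x ≠ y := fun h => hyB (h ▸ hxB)
  funext k
  classical
  simp only [Pi.sub_apply, Set.indicator_apply, Pi.single_apply, Set.mem_insert_iff,
    Set.mem_diff, Set.mem_singleton_iff, Pi.one_apply]
  by_cases hkx : k = x <;> by_cases hky : k = y <;> by_cases hkB : k ∈ B <;> simp_all

/-- Differences of unit vectors of equivalent elements lie in the vector span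
of the vertex set. -/
lemma single_diff_mem (hfin : M.E.Finite) (hxy : Relation.EqvGen (relC M) x y) :
    Pi.single x (1 : ℝ) - Pi.single y 1 ∈ vectorSpan ℝ (vertexSet M) := by
  induction hxy with
  | rel x y hr =>
    obtain ⟨C, hC, hxC, hyC⟩ := hr
    rcases eq_or_ne x y with rfl | hne
    · simp only [sub_self]; exact Submodule.zero_mem _
    obtain ⟨B, hB, hsub⟩ := (circuitE_diff_singleton_indep hC hyC).exists_isBase_superset
    have hxB : x ∈ B := hsub ⟨hxC, hne⟩
    have hyB : y ∉ B := by
      intro hyB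
      have hCB : C ⊆ B := by
        intro c hc
        rcases eq_or_ne c y with rfl | hcy
        · exact hyB
        · exact hsub ⟨hc, hcy⟩
      exact (Matroid.dep_iff.mp hC.1).1 (hB.indep.subset hCB)
    have hB' : M.IsBase (insert y (B \ {x})) := by
      refine circuit_exchange hfin hB hC ?_ hyC hyB hxC hne
      intro c hc
      rcases eq_or_ne c y with rfl | hcy
      · exact Set.mem_insert _ _
      · exact Set.mem_insert_of_mem _ (hsub ⟨hc, hcy⟩)
    have hmem : Set.indicator B (1 : ℕ → ℝ) -ᵥ Set.indicator (insert y (B \ {x})) 1 ∈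
        vectorSpan ℝ (vertexSet M) :=
      vsub_mem_vectorSpan ℝ ⟨B, hB, rfl⟩ ⟨_, hB', rfl⟩
    rwa [vsub_eq_sub, indicator_sub_eq hxB hyB] at hmem
  | refl x => simp only [sub_self]; exact Submodule.zero_mem _
  | symm x y _ ih =>
    have := Submodule.neg_mem _ ih
    rwa [neg_sub] at this
  | trans x y z _ _ ih1 ih2 =>
    have := Submodule.add_mem _ ih1 ih2
    rwa [sub_add_sub_cancel] at this

/-- A base restricted to a component is a basis of the component. -/
lemma basis_inter_cls (hfin : M.E.Finite) (hB : M.IsBase B) (a : ℕ) :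
    M.IsBasis (B ∩ cls M a) (cls M a) := by
  refine (hB.indep.subset Set.inter_subset_left).isBasis_of_subset_of_subset_closure
    Set.inter_subset_right ?_
  rintro e ⟨heE, heqv⟩
  by_cases heB : e ∈ B
  · exact M.mem_closure_of_mem ⟨heB, heE, heqv⟩
      (Set.inter_subset_left.trans hB.subset_ground)
  · have hdep : M.Dep (insert e B) := by
      rw [← M.not_indep_iff (Set.insert_subset heE hB.subset_ground)]
      intro hind
      exact heB (((hB.eq_of_subset_indep hind (Set.subset_insert _ _)).symm) ▸
        Set.mem_insert e B)
    obtain ⟨C, hC, hCsub⟩ := exists_circuitE_subset hfin hdep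
    have heC : e ∈ C := by
      by_contra heC
      refine (Matroid.dep_iff.mp hC.1).1 (hB.indep.subset fun c hc => ?_)
      rcases hCsub hc with rfl | hcB
      · exact absurd hc heC
      · exact hcB
    have hCcls : C ⊆ cls M a := fun c hc =>
      ⟨(circuitE_subset_ground hC) hc, heqv.trans _ _ _ (Relation.EqvGen.rel _ _ ⟨C, hC, heC, hc⟩)⟩
    have hsub2 : C \ {e} ⊆ B ∩ cls M a := by
      rintro c ⟨hc, hce⟩
      exact ⟨((hCsub hc).resolve_left hce), hCcls hc⟩
    exact M.closure_subset_closure hsub2 (circuitE_mem_closure_diff hC heC)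

end MBP

open MBP

/-- The dimension of the matroid base polytope of a matroid `M` on `n` elements equals
`n - κ(M)`, where `κ(M)` is the number of connected components of `M`. -/
theorem dim_basePolytope (n : ℕ) (M : Matroid ℕ) (hE : M.E = Set.Icc 1 n) :
    Module.finrank ℝ (affineSpan ℝ (basePolytope M)).direction = n - numComponents M := by
  classical
  have hEfin : M.E.Finite := hE ▸ Set.finite_Icc 1 n
  -- rewrite the goal in terms of the vector span of the vertex set
  have hbp : basePolytope M = convexHull ℝ (vertexSet M) := rfl
  rw [hbp, affineSpan_convexHull, direction_affineSpan]
  -- finiteness of classes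
  have hclsfin : ∀ a : ℕ, (cls M a).Finite := fun a => hEfin.subset (cls_subset_ground M a)
  have hRfin : (Rset M).Finite := hEfin.subset Rset_subset_ground
  have hDfin : (M.E \ Rset M).Finite := hEfin.diff
  set s : Finset ℕ := hDfin.toFinset with hs_def
  have hs_mem : ∀ k, k ∈ s ↔ k ∈ M.E \ Rset M := fun k => hDfin.mem_toFinset
  -- the count of components
  have hcard_R : (Rset M).ncard = numComponents M := by
    have himg : {S : Set ℕ | ∃ a ∈ M.E, S = cls M a} = cls M '' Rset M := by
      ext S
      constructor
      · rintro ⟨a, ha, rfl⟩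
        exact ⟨rep M a, rep_mem_Rset ha, (cls_eq_of_mem (rep_mem ha)).symm⟩
      · rintro ⟨k, hk, rfl⟩
        exact ⟨k, hk.1, rfl⟩
    have hinj : Set.InjOn (cls M) (Rset M) := by
      intro r1 h1 r2 h2 hcls
      have : r1 ∈ cls M r2 := hcls ▸ mem_cls_self h1.1
      rw [eq_rep_of_mem_Rset_cls h1 this, h2.2]
    have : numComponents M = (cls M '' Rset M).ncard := by
      rw [numComponents, ← himg]
      rfl
    rw [this, Set.ncard_image_of_injOn hinj]
  have hcard_s : s.card = n - numComponents M := by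
    rw [← Set.ncard_eq_toFinset_card _ hDfin,
      Set.ncard_diff Rset_subset_ground hRfin, hcard_R, hE]
    congr 1
    rw [← Finset.coe_Icc, Set.ncard_coe_finset, Nat.card_Icc]
    omega
  -- The subspace V of the upper bound
  let V : Submodule ℝ (ℕ → ℝ) :=
    { carrier := {z | (∀ k, k ∉ M.E → z k = 0) ∧
        ∀ a ∈ M.E, ∑ i ∈ (hclsfin a).toFinset, z i = 0}
      add_mem' := by
        rintro u w ⟨hu1, hu2⟩ ⟨hw1, hw2⟩
        refine ⟨fun k hk => by simp [hu1 k hk, hw1 k hk], fun a ha => ?_⟩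
        simp only [Pi.add_apply, Finset.sum_add_distrib, hu2 a ha, hw2 a ha, add_zero]
      zero_mem' := ⟨fun _ _ => rfl, fun a _ => by simp⟩
      smul_mem' := by
        rintro c u ⟨hu1, hu2⟩
        refine ⟨fun k hk => by simp [hu1 k hk], fun a ha => ?_⟩
        simp only [Pi.smul_apply, smul_eq_mul, ← Finset.mul_sum, hu2 a ha, mul_zero] }
  -- vertex sums over a component
  have hsum_vtx : ∀ (B : Set ℕ), M.IsBase B → ∀ a : ℕ,
      ∑ i ∈ (hclsfin a).toFinset, Set.indicator B (1 : ℕ → ℝ) i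
        = ((B ∩ cls M a).ncard : ℝ) := by
    intro B hB a
    rw [Set.ncard_eq_toFinset_card _ ((hclsfin a).subset Set.inter_subset_right :
      (B ∩ cls M a).Finite)]
    simp only [Set.indicator_apply, Pi.one_apply]
    rw [Finset.sum_boole]
    congr 1
    apply Finset.card_bij (fun i _ => i)
    · intro i hi
      simp only [Finset.mem_filter, Set.Finite.mem_toFinset] at hi ⊢
      exact ⟨hi.2, hi.1⟩
    · intro i _ j _ h; exact h
    · intro j hj
      simp only [Set.Finite.mem_toFinset, Finset.mem_filter] at hj ⊢
      exact ⟨j, ⟨hj.2, hj.1⟩, rfl⟩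
  -- the vector span is contained in V
  have hWV : vectorSpan ℝ (vertexSet M) ≤ V := by
    rw [vectorSpan_def]
    refine Submodule.span_le.2 ?_
    rintro u hu
    rw [Set.mem_vsub] at hu
    obtain ⟨p, ⟨B, hB, rfl⟩, q, ⟨B₁, hB₁, rfl⟩, rfl⟩ := hu
    rw [vsub_eq_sub]
    constructor
    · intro k hk
      simp [Set.indicator_of_notMem (fun h => hk (hB.subset_ground h)),
        Set.indicator_of_notMem (fun h => hk (hB₁.subset_ground h))]
    · intro a _
      have hcardeq : (B ∩ cls M a).ncard = (B₁ ∩ cls M a).ncard := by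
        have := (basis_inter_cls hEfin hB a).encard_eq_encard (basis_inter_cls hEfin hB₁ a)
        rw [Set.ncard_def, this, ← Set.ncard_def]
      simp only [Pi.sub_apply, Finset.sum_sub_distrib, hsum_vtx B hB a, hsum_vtx B₁ hB₁ a,
        hcardeq, sub_self]
  -- V is finite dimensional of dimension at most s.card
  let π : V →ₗ[ℝ] (↥s → ℝ) := (LinearMap.funLeft ℝ ℝ (fun i : ↥s => (i : ℕ))).comp V.subtype
  have hπinj : Function.Injective π := by
    rw [← LinearMap.ker_eq_bot, LinearMap.ker_eq_bot']
    rintro ⟨z, hz1, hz2⟩ hker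
    have hzs : ∀ i : ↥s, z (i : ℕ) = 0 := fun i => congrFun hker i
    refine Subtype.ext (funext fun k => ?_)
    show z k = 0
    by_cases hk1 : k ∈ M.E
    · by_cases hk2 : k ∈ Rset M
      · have hsum := hz2 k hk1
        have hzero : ∀ i ∈ (hclsfin k).toFinset, i ≠ k → z i = 0 := by
          intro i hi hik
          rw [Set.Finite.mem_toFinset] at hi
          have hiR : i ∉ Rset M := fun hiR => hik (by
            rw [eq_rep_of_mem_Rset_cls hiR hi, hk2.2])
          exact hzs ⟨i, (hs_mem i).2 ⟨hi.1, hiR⟩⟩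
        rwa [Finset.sum_eq_single k hzero
          (fun hk => absurd ((hclsfin k).mem_toFinset.2 (mem_cls_self hk1)) hk)] at hsum
      · exact hzs ⟨k, (hs_mem k).2 ⟨hk1, hk2⟩⟩
    · exact hz1 k hk1
  have hVfin : FiniteDimensional ℝ V := FiniteDimensional.of_injective π hπinj
  have hVle : Module.finrank ℝ V ≤ s.card := by
    have := LinearMap.finrank_le_finrank_of_injective hπinj
    rwa [Module.finrank_fintype_fun_eq_card, Fintype.card_coe] at this
  have hWfin : FiniteDimensional ℝ (vectorSpan ℝ (vertexSet M)) :=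
    Submodule.finiteDimensional_of_le hWV
  -- the linearly independent family for the lower bound
  let v : ↥s → (ℕ → ℝ) := fun i => Pi.single (i : ℕ) 1 - Pi.single (rep M (i : ℕ)) 1
  have hv_mem : ∀ i : ↥s, v i ∈ vectorSpan ℝ (vertexSet M) := by
    intro i
    have hi := (hs_mem i).1 i.2
    exact single_diff_mem hEfin (rep_mem hi.1).2
  have hv_li : LinearIndependent ℝ v := by
    rw [linearIndependent_iff']
    intro t g hsum i hit
    have := congrFun hsum (i : ℕ)
    simp only [v, Finset.sum_apply, Pi.smul_apply, Pi.sub_apply, Pi.single_apply, smul_eq_mul,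
      Pi.zero_apply] at this
    have hrep0 : ∀ j : ↥s, ¬ ((i : ℕ) = rep M (j : ℕ)) := by
      intro j h
      have hj := (hs_mem j).1 j.2
      exact ((hs_mem i).1 i.2).2 (h ▸ rep_mem_Rset hj.1)
    have hterm : ∀ j ∈ t, g j * ((if (i : ℕ) = (j : ℕ) then (1 : ℝ) else 0) -
        if (i : ℕ) = rep M (j : ℕ) then 1 else 0) = if j = i then g j else 0 := by
      intro j _
      rw [if_neg (hrep0 j), sub_zero]
      rcases eq_or_ne j i with rfl | hji
      · simp
      · rw [if_neg (fun h : (i : ℕ) = (j : ℕ) => hji (Subtype.ext h.symm)), if_neg hji,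
          mul_zero]
    rw [Finset.sum_congr rfl hterm, Finset.sum_ite_eq' t i (fun j => g j), if_pos hit] at this
    exact this
  have hlower : s.card ≤ Module.finrank ℝ (vectorSpan ℝ (vertexSet M)) := by
    have hspan : Submodule.span ℝ (Set.range v) ≤ vectorSpan ℝ (vertexSet M) :=
      Submodule.span_le.2 (Set.range_subset_iff.2 hv_mem)
    have h1 := finrank_span_eq_card hv_li
    rw [Fintype.card_coe] at h1
    rw [← h1]
    exact Submodule.finrank_mono hspan
  have hupper : Module.finrank ℝ (vectorSpan ℝ (vertexSet M)) ≤ s.card :=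
    le_trans (Submodule.finrank_mono hWV) hVle
  rw [← hcard_s]
  exact le_antisymm hupper hlower
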